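/- Assume moreover that r > 0, that π is concentrated on {(x,y) ∈ Z × Z : ‖x − y‖ ≤ r}, and that π(Z × Z) ≥ 1 − r. Define the Borel measure π_0 := (pr0, M)_*π + (1/2)·ι_*(μ0 − (pr0)_*π) on Z × Z, where ι(x) := (x,x). Then: (i) (pr0)_*π_0 ≤ μ0; (ii) (pr1)_*π_0 ≤ μ_{1/2}; (iii) π_0 is concentrated on {(x,y) ∈ Z × Z : ‖x − y‖ ≤ r/2}; and (iv) π_0(Z × Z) ≥ 1 − r/2. That is, π_0 is an (r/2)-subtransport plan between μ0 and μ_{1/2} with deficiency at most r/2. -/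

import Mathlib

open MeasureTheory
open scoped ENNReal

/-- The midpoint map `M(x,y) = (x+y)/2` on a real normed space. -/
noncomputable def midMap {Z : Type*} [NormedAddCommGroup Z] [NormedSpace ℝ Z]
    (p : Z × Z) : Z := (2⁻¹ : ℝ) • (p.1 + p.2)

/-- The measure `μ_{1/2} := M_*π + (1/2)(μ0 − (pr0)_*π) + (1/2)(μ1 − (pr1)_*π)`. -/
noncomputable def muHalf {Z : Type*} [NormedAddCommGroup Z] [NormedSpace ℝ Z]
    [MeasurableSpace Z] (μ0 μ1 : Measure Z) (π : Measure (Z × Z)) : Measure Z :=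
  π.map midMap + (2⁻¹ : ℝ≥0∞) • (μ0 - π.map Prod.fst)
    + (2⁻¹ : ℝ≥0∞) • (μ1 - π.map Prod.snd)

/-- The measure `π_0 := (pr0, M)_*π + (1/2)·ι_*(μ0 − (pr0)_*π)` where `ι(x) = (x,x)`. -/
noncomputable def piZero {Z : Type*} [NormedAddCommGroup Z] [NormedSpace ℝ Z]
    [MeasurableSpace Z] (μ0 : Measure Z) (π : Measure (Z × Z)) : Measure (Z × Z) :=
  π.map (fun p => (p.1, midMap p))
    + (2⁻¹ : ℝ≥0∞) • (μ0 - π.map Prod.fst).map (fun x => (x, x))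

/-- Let `Z` be a separable real Banach space, `μ0`, `μ1` Borel probability measures on
`Z`, and `π` a Borel measure on `Z × Z` with `(pr0)_*π ≤ μ0`, `(pr1)_*π ≤ μ1`. Assume
`r > 0`, `π` is concentrated on `{‖x − y‖ ≤ r}` and `π(Z × Z) ≥ 1 − r`. Then `π_0` is an
`(r/2)`-subtransport plan between `μ0` and `μ_{1/2}` with deficiency at most `r/2`:
(i) `(pr0)_*π_0 ≤ μ0`; (ii) `(pr1)_*π_0 ≤ μ_{1/2}`; (iii) `π_0` is concentrated on
`{‖x − y‖ ≤ r/2}`; (iv) `π_0(Z × Z) ≥ 1 − r/2`. -/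
theorem piZero_subtransport
    (Z : Type*) [NormedAddCommGroup Z] [NormedSpace ℝ Z] [CompleteSpace Z]
    [SecondCountableTopology Z] [MeasurableSpace Z] [BorelSpace Z]
    (μ0 μ1 : Measure Z) [IsProbabilityMeasure μ0] [IsProbabilityMeasure μ1]
    (π : Measure (Z × Z))
    (hπ0 : π.map Prod.fst ≤ μ0) (hπ1 : π.map Prod.snd ≤ μ1)
    (r : ℝ) (hr : 0 < r)
    (hconc : π {p : Z × Z | r < ‖p.1 - p.2‖} = 0)
    (hdef : 1 - r ≤ (π Set.univ).toReal) :
    (piZero μ0 π).map Prod.fst ≤ μ0 ∧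
    (piZero μ0 π).map Prod.snd ≤ muHalf μ0 μ1 π ∧
    piZero μ0 π {p : Z × Z | r / 2 < ‖p.1 - p.2‖} = 0 ∧
    1 - r / 2 ≤ (piZero μ0 π Set.univ).toReal := by
  have hM : Measurable (midMap : Z × Z → Z) :=
    (continuous_const.smul (continuous_fst.add continuous_snd)).measurable
  have hg : Measurable (fun p : Z × Z => (p.1, midMap p)) :=
    measurable_fst.prodMk hM
  have hdiag : Measurable (fun x : Z => (x, x)) := measurable_id.prodMk measurable_id
  have hfst : Measurable (Prod.fst : Z × Z → Z) := measurable_fst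
  have hsnd : Measurable (Prod.snd : Z × Z → Z) := measurable_snd
  have hfin : IsFiniteMeasure (π.map Prod.fst) :=
    ⟨lt_of_le_of_lt (hπ0 Set.univ) (by simp)⟩
  have hπuniv : π.map Prod.fst Set.univ = π Set.univ := by
    rw [Measure.map_apply hfst MeasurableSet.univ]; rfl
  have hπfin : IsFiniteMeasure π :=
    ⟨by rw [← hπuniv]; exact hfin.measure_univ_lt_top⟩
  have hπle1 : π Set.univ ≤ 1 := by
    rw [← hπuniv]; exact (hπ0 Set.univ).trans (by simp)
  -- (i)
  have hmapfst : (piZero μ0 π).map Prod.fst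
      = π.map Prod.fst + (2⁻¹ : ℝ≥0∞) • (μ0 - π.map Prod.fst) := by
    unfold piZero
    rw [Measure.map_add _ _ hfst, Measure.map_smul, Measure.map_map hfst hg,
      Measure.map_map hfst hdiag]
    have h1 : (Prod.fst ∘ fun p : Z × Z => (p.1, midMap p)) = Prod.fst := rfl
    have h2 : (Prod.fst ∘ fun x : Z => (x, x)) = id := rfl
    rw [h1, h2, Measure.map_id]
  have part1 : (piZero μ0 π).map Prod.fst ≤ μ0 := by
    rw [hmapfst]
    have hhalf : (2⁻¹ : ℝ≥0∞) • (μ0 - π.map Prod.fst) ≤ μ0 - π.map Prod.fst := by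
      intro s
      rw [Measure.smul_apply, smul_eq_mul]
      exact mul_le_of_le_one_left zero_le (by norm_num)
    calc π.map Prod.fst + (2⁻¹ : ℝ≥0∞) • (μ0 - π.map Prod.fst)
        ≤ π.map Prod.fst + (μ0 - π.map Prod.fst) := add_le_add le_rfl hhalf
      _ = μ0 := by rw [add_comm, Measure.sub_add_cancel_of_le hπ0]
  -- (ii)
  have hmapsnd : (piZero μ0 π).map Prod.snd
      = π.map midMap + (2⁻¹ : ℝ≥0∞) • (μ0 - π.map Prod.fst) := by
    unfold piZero
    rw [Measure.map_add _ _ hsnd, Measure.map_smul, Measure.map_map hsnd hg,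
      Measure.map_map hsnd hdiag]
    have h1 : (Prod.snd ∘ fun p : Z × Z => (p.1, midMap p)) = midMap := rfl
    have h2 : (Prod.snd ∘ fun x : Z => (x, x)) = id := rfl
    rw [h1, h2, Measure.map_id]
  have part2 : (piZero μ0 π).map Prod.snd ≤ muHalf μ0 μ1 π := by
    rw [hmapsnd]; unfold muHalf
    exact Measure.le_add_right le_rfl
  -- (iii)
  have hSmeas : MeasurableSet {p : Z × Z | r / 2 < ‖p.1 - p.2‖} := by
    have : IsOpen {p : Z × Z | r / 2 < ‖p.1 - p.2‖} :=
      isOpen_lt continuous_const ((continuous_fst.sub continuous_snd).norm)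
    exact this.measurableSet
  have hnormhalf : ∀ p : Z × Z, ‖p.1 - midMap p‖ = ‖p.1 - p.2‖ / 2 := by
    intro p
    have : p.1 - midMap p = (2⁻¹ : ℝ) • (p.1 - p.2) := by
      unfold midMap
      rw [smul_add, smul_sub]
      have h2 : (2⁻¹ : ℝ) • p.1 + (2⁻¹ : ℝ) • p.1 = p.1 := by
        rw [← add_smul]; norm_num
      abel_nf
      rw [← h2]; abel_nf
      module
    rw [this, norm_smul]
    simp [abs_of_nonneg]
    ring
  have part3 : piZero μ0 π {p : Z × Z | r / 2 < ‖p.1 - p.2‖} = 0 := by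
    unfold piZero
    rw [Measure.add_apply, Measure.smul_apply,
      Measure.map_apply hg hSmeas, Measure.map_apply hdiag hSmeas]
    have e1 : π ((fun p : Z × Z => (p.1, midMap p)) ⁻¹' {p : Z × Z | r / 2 < ‖p.1 - p.2‖}) = 0 := by
      apply measure_mono_null _ hconc
      intro p hp
      simp only [Set.mem_preimage, Set.mem_setOf_eq, hnormhalf p] at hp
      simpa using (by linarith : r < ‖p.1 - p.2‖)
    have e2 : ((fun x : Z => (x, x)) ⁻¹' {p : Z × Z | r / 2 < ‖p.1 - p.2‖}) = ∅ := by
      ext x; simp; linarith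
    rw [e1, e2]
    simp
  -- (iv)
  have htot : piZero μ0 π Set.univ = π Set.univ + 2⁻¹ * (1 - π Set.univ) := by
    unfold piZero
    rw [Measure.add_apply, Measure.smul_apply,
      Measure.map_apply hg MeasurableSet.univ, Measure.map_apply hdiag MeasurableSet.univ,
      Set.preimage_univ, Set.preimage_univ,
      Measure.sub_apply MeasurableSet.univ hπ0, hπuniv]
    simp [smul_eq_mul]
  have part4 : 1 - r / 2 ≤ (piZero μ0 π Set.univ).toReal := by
    rw [htot]
    have hne : π Set.univ ≠ ⊤ := measure_ne_top π _
    have h1a : (1 : ℝ≥0∞) - π Set.univ ≠ ⊤ := by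
      simp [ENNReal.sub_ne_top]
    rw [ENNReal.toReal_add hne (by finiteness), ENNReal.toReal_mul,
      ENNReal.toReal_sub_of_le hπle1 (by simp)]
    have hle1r : (π Set.univ).toReal ≤ 1 := by
      have := ENNReal.toReal_mono (by simp) hπle1
      simpa using this
    have h2 : (2⁻¹ : ℝ≥0∞).toReal = 2⁻¹ := by simp
    rw [h2]
    simp only [ENNReal.toReal_one]
    linarith
  exact ⟨part1, part2, part3, part4⟩
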